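/- Let B ∈ GL(d,ℚ). Then the subgroup N = ⟨T_k, M_l, τ : k ∈ B^{-tr}ℤ^d ∩ ℤ^d, l ∈ Bℤ^d, τ ∈ [G,G]⟩ is an abelian normal subgroup of the time-frequency group G = ⟨T_k, M_l : k ∈ ℤ^d, l ∈ Bℤ^d⟩. Concretely, for s ∈ ℤ^d one has T_s (T_k M_l τ) T_s^{-1} = e^{-2πi⟨l,s⟩} τ T_k M_l ∈ N, and for s ∈ Bℤ^d one has M_s (T_k M_l τ) M_s^{-1} = τ T_k M_l ∈ N. -/

import Mathlib

noncomputable section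

open Complex Matrix

/-- The real dot product on `Fin d → ℝ`. -/
def dotR {d : ℕ} (a b : Fin d → ℝ) : ℝ := ∑ i, a i * b i

/-- `e2pi t = exp (2 π i t)`. -/
def e2pi (t : ℝ) : ℂ := Complex.exp (2 * Real.pi * Complex.I * t)

lemma e2pi_add (s t : ℝ) : e2pi (s + t) = e2pi s * e2pi t := by
  rw [e2pi, e2pi, e2pi, ← Complex.exp_add]
  congr 1
  push_cast
  ring

lemma e2pi_zero : e2pi 0 = 1 := by simp [e2pi]

lemma e2pi_neg_mul (t : ℝ) : e2pi (-t) * e2pi t = 1 := by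
  rw [← e2pi_add, neg_add_cancel, e2pi_zero]

/-- Translation operator `T_k f (x) = f (x - k)`, as a bijection of functions. -/
def Tr {d : ℕ} (k : Fin d → ℝ) : Equiv.Perm ((Fin d → ℝ) → ℂ) where
  toFun f := fun x => f (x - k)
  invFun f := fun x => f (x + k)
  left_inv f := by funext x; simp
  right_inv f := by funext x; simp

/-- Modulation operator `M_l f (x) = e^{2πi⟨l,x⟩} f (x)`. -/
def Mo {d : ℕ} (l : Fin d → ℝ) : Equiv.Perm ((Fin d → ℝ) → ℂ) where
  toFun f := fun x => e2pi (dotR l x) * f x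
  invFun f := fun x => e2pi (-(dotR l x)) * f x
  left_inv f := by
    funext x; dsimp; rw [← mul_assoc, e2pi_neg_mul, one_mul]
  right_inv f := by
    funext x; dsimp
    rw [← mul_assoc, mul_comm (e2pi (dotR l x)), e2pi_neg_mul, one_mul]

/-- Scalar operator: multiplication by the unimodular constant `e^{2πiθ}`. -/
def Sc {d : ℕ} (θ : ℝ) : Equiv.Perm ((Fin d → ℝ) → ℂ) where
  toFun f := fun x => e2pi θ * f x
  invFun f := fun x => e2pi (-θ) * f x
  left_inv f := by
    funext x; dsimp; rw [← mul_assoc, e2pi_neg_mul, one_mul]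
  right_inv f := by
    funext x; dsimp
    rw [← mul_assoc, mul_comm (e2pi θ), e2pi_neg_mul, one_mul]

/-- The time–frequency group `G = ⟨T_k, M_l : k ∈ ℤ^d, l ∈ Bℤ^d⟩`. -/
def TFGroup {d : ℕ} (B : Matrix (Fin d) (Fin d) ℝ) :
    Subgroup (Equiv.Perm ((Fin d → ℝ) → ℂ)) :=
  Subgroup.closure
    ({g | ∃ k : Fin d → ℤ, g = Tr (fun i => (k i : ℝ))} ∪
     {g | ∃ z : Fin d → ℤ, g = Mo (B.mulVec (fun i => (z i : ℝ)))})


/-- The subgroup `N = ⟨T_k, M_l, τ : k ∈ B^{-tr}ℤ^d ∩ ℤ^d, l ∈ Bℤ^d, τ ∈ [G,G]⟩`. -/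
def Nsub {d : ℕ} (B : Matrix (Fin d) (Fin d) ℝ) : Subgroup (Equiv.Perm ((Fin d → ℝ) → ℂ)) :=
  Subgroup.closure
    ({g | ∃ k : Fin d → ℤ, (∃ z : Fin d → ℤ,
        (fun i => (k i : ℝ)) = (B⁻¹)ᵀ.mulVec (fun i => (z i : ℝ))) ∧
        g = Tr (fun i => (k i : ℝ))} ∪
     {g | ∃ w : Fin d → ℤ, g = Mo (B.mulVec (fun i => (w i : ℝ)))} ∪
     {g | g ∈ ⁅TFGroup B, TFGroup B⁆})

section Aux

variable {d : ℕ}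

lemma e2pi_intCast (n : ℤ) : e2pi (n : ℝ) = 1 := by
  rw [e2pi]
  have h : (2 * Real.pi * Complex.I * ((n : ℝ) : ℂ)) = (n : ℤ) * (2 * Real.pi * Complex.I) := by
    push_cast; ring
  rw [h, Complex.exp_int_mul_two_pi_mul_I]

lemma dotR_add_left (a b x : Fin d → ℝ) : dotR (a + b) x = dotR a x + dotR b x := by
  simp [dotR, add_mul, Finset.sum_add_distrib]

lemma dotR_add_right (l a b : Fin d → ℝ) : dotR l (a + b) = dotR l a + dotR l b := by
  simp [dotR, mul_add, Finset.sum_add_distrib]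

lemma dotR_neg_right (l a : Fin d → ℝ) : dotR l (-a) = -dotR l a := by
  simp [dotR]

lemma dotR_sub_right (l a b : Fin d → ℝ) : dotR l (a - b) = dotR l a - dotR l b := by
  simp [dotR, mul_sub, Finset.sum_sub_distrib]

lemma dotR_zero_left (a : Fin d → ℝ) : dotR 0 a = 0 := by simp [dotR]

lemma dotR_zero_right (a : Fin d → ℝ) : dotR a 0 = 0 := by simp [dotR]

lemma Tr_mul (a b : Fin d → ℝ) : Tr a * Tr b = Tr (a + b) := by
  ext f x
  simp [Tr, Equiv.Perm.mul_apply, sub_sub]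

lemma Mo_mul (a b : Fin d → ℝ) : Mo a * Mo b = Mo (a + b) := by
  ext f x
  simp [Mo, Equiv.Perm.mul_apply, dotR_add_left, e2pi_add, mul_assoc]

lemma Sc_mul (s t : ℝ) : Sc (d := d) s * Sc t = Sc (s + t) := by
  ext f x
  simp [Sc, Equiv.Perm.mul_apply, e2pi_add, mul_assoc]

lemma Sc_zero : Sc (d := d) 0 = 1 := by
  ext f x
  simp [Sc, e2pi_zero]

lemma Tr_zero : Tr (0 : Fin d → ℝ) = 1 := by
  ext f x
  simp [Tr]

lemma Mo_zero : Mo (0 : Fin d → ℝ) = 1 := by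
  ext f x
  simp [Mo, dotR_zero_left, e2pi_zero]

lemma Sc_inv (s : ℝ) : (Sc (d := d) s)⁻¹ = Sc (-s) :=
  inv_eq_of_mul_eq_one_right (by rw [Sc_mul, add_neg_cancel, Sc_zero])

lemma Sc_intCast (n : ℤ) : Sc (d := d) ((n : ℤ) : ℝ) = 1 := by
  ext f x
  simp [Sc, e2pi_intCast]

lemma Sc_Tr (s : ℝ) (a : Fin d → ℝ) : Sc s * Tr a = Tr a * Sc s := by
  ext f x
  simp [Sc, Tr, Equiv.Perm.mul_apply]

lemma Sc_Mo (s : ℝ) (l : Fin d → ℝ) : Sc s * Mo l = Mo l * Sc s := by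
  ext f x
  simp [Sc, Mo, Equiv.Perm.mul_apply, mul_left_comm]

lemma nf_mul (s t : ℝ) (a l a' l' : Fin d → ℝ) :
    (Sc s * Tr a * Mo l) * (Sc t * Tr a' * Mo l') =
      Sc (s + t + dotR l a') * Tr (a + a') * Mo (l + l') := by
  ext f x
  simp only [Sc, Mo, Tr, Equiv.Perm.mul_apply, Equiv.coe_fn_mk]
  simp only [← mul_assoc, ← e2pi_add, sub_sub]
  simp only [dotR_add_left, dotR_add_right, dotR_sub_right]
  congr 2
  ring

lemma nf_inv (s : ℝ) (a l : Fin d → ℝ) :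
    (Sc s * Tr a * Mo l)⁻¹ = Sc (dotR l a - s) * Tr (-a) * Mo (-l) := by
  refine inv_eq_of_mul_eq_one_right ?_
  rw [nf_mul, dotR_neg_right, add_neg_cancel, add_neg_cancel, Tr_zero, Mo_zero]
  have h : s + (dotR l a - s) + -dotR l a = 0 := by ring
  rw [h, Sc_zero, one_mul, mul_one]

lemma conj_nf (s t : ℝ) (a l b m : Fin d → ℝ) :
    (Sc s * Tr a * Mo l) * (Sc t * Tr b * Mo m) * (Sc s * Tr a * Mo l)⁻¹ =
      Sc (t + dotR l b - dotR m a) * Tr b * Mo m := by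
  rw [nf_inv, nf_mul, nf_mul]
  have h1 : a + b + -a = b := by abel
  have h2 : l + m + -l = m := by abel
  rw [h1, h2]
  have h3 : s + t + dotR l b + (dotR l a - s) + dotR (l + m) (-a)
      = t + dotR l b - dotR m a := by
    rw [dotR_add_left, dotR_neg_right, dotR_neg_right]; ring
  rw [h3]

lemma rearr (a l : Fin d → ℝ) (s : ℝ) : Tr a * Mo l * Sc s = Sc s * Tr a * Mo l := by
  rw [mul_assoc, ← Sc_Mo, ← mul_assoc, ← Sc_Tr, mul_assoc, ← mul_assoc]

lemma iv_add (a b : Fin d → ℤ) :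
    (fun i => ((a + b) i : ℝ)) = (fun i => (a i : ℝ)) + fun i => (b i : ℝ) := by
  funext i; simp

lemma iv_neg (a : Fin d → ℤ) :
    (fun i => ((-a) i : ℝ)) = -fun i => (a i : ℝ) := by
  funext i; simp

lemma iv_zero : (fun i => (((0 : Fin d → ℤ)) i : ℝ)) = (0 : Fin d → ℝ) := by
  funext i; simp

end Aux

open scoped commutatorElement

/-- For `B ∈ GL(d,ℚ)`, the subgroup
`N = ⟨T_k, M_l, τ : k ∈ B^{-tr}ℤ^d ∩ ℤ^d, l ∈ Bℤ^d, τ ∈ [G,G]⟩` is an abelian normal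
subgroup of `G = ⟨T_k, M_l : k ∈ ℤ^d, l ∈ Bℤ^d⟩`; concretely it is closed under conjugation,
with `T_s (T_k M_l τ) T_s⁻¹ = e^{-2πi⟨l,s⟩} τ T_k M_l` for `s ∈ ℤ^d` and
`M_s (T_k M_l τ) M_s⁻¹ = τ T_k M_l` for `s ∈ Bℤ^d`. -/

theorem stmt5 {d : ℕ} (B : Matrix (Fin d) (Fin d) ℚ) (hB : IsUnit B.det)
    (Br : Matrix (Fin d) (Fin d) ℝ) (hBr : Br = B.map (Rat.cast : ℚ → ℝ)) :
    (∀ a b : Equiv.Perm ((Fin d → ℝ) → ℂ), a ∈ Nsub Br → b ∈ Nsub Br → a * b = b * a) ∧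
    Nsub Br ≤ TFGroup Br ∧
    (∀ g ∈ TFGroup Br, ∀ n ∈ Nsub Br, g * n * g⁻¹ ∈ Nsub Br) ∧
    (∀ (s k : Fin d → ℤ),
      (∃ z : Fin d → ℤ, (fun i => (k i : ℝ)) = (Br⁻¹)ᵀ.mulVec (fun i => (z i : ℝ))) →
      ∀ (w : Fin d → ℤ) (θ : ℝ),
        Tr (fun i => (s i : ℝ)) *
            (Tr (fun i => (k i : ℝ)) * Mo (Br.mulVec (fun i => (w i : ℝ))) * Sc θ) *
            (Tr (fun i => (s i : ℝ)))⁻¹ =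
          Sc (-(dotR (Br.mulVec (fun i => (w i : ℝ))) (fun i => (s i : ℝ)))) * Sc θ *
            Tr (fun i => (k i : ℝ)) * Mo (Br.mulVec (fun i => (w i : ℝ)))) ∧
    (∀ (s' k : Fin d → ℤ),
      (∃ z : Fin d → ℤ, (fun i => (k i : ℝ)) = (Br⁻¹)ᵀ.mulVec (fun i => (z i : ℝ))) →
      ∀ (w : Fin d → ℤ) (θ : ℝ),
        Mo (Br.mulVec (fun i => (s' i : ℝ))) *
            (Tr (fun i => (k i : ℝ)) * Mo (Br.mulVec (fun i => (w i : ℝ))) * Sc θ) *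
            (Mo (Br.mulVec (fun i => (s' i : ℝ))))⁻¹ =
          Sc θ * Tr (fun i => (k i : ℝ)) * Mo (Br.mulVec (fun i => (w i : ℝ)))) := by
  have hdetR : IsUnit Br.det := by
    have h1 : Br.det = ((B.det : ℚ) : ℝ) := by
      rw [hBr]
      exact (RingHom.map_det (Rat.castHom ℝ) B).symm
    rw [h1, isUnit_iff_ne_zero]
    exact_mod_cast isUnit_iff_ne_zero.mp hB
  have hInv : Br⁻¹ * Br = 1 := Matrix.nonsing_inv_mul Br hdetR
  have key : ∀ w z : Fin d → ℤ,
      Sc (d := d) (dotR (Br.mulVec fun i => ((w i : ℝ))) ((Br⁻¹)ᵀ.mulVec fun i => ((z i : ℝ)))) = 1 := by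
    intro w z
    have h2 : dotR (Br.mulVec fun i => ((w i : ℝ))) ((Br⁻¹)ᵀ.mulVec fun i => ((z i : ℝ)))
        = ((∑ i, w i * z i : ℤ) : ℝ) := by
      show dotProduct _ _ = _
      rw [Matrix.dotProduct_mulVec, Matrix.vecMul_transpose, Matrix.mulVec_mulVec, hInv,
        Matrix.one_mulVec]
      simp [dotProduct]
    rw [h2, Sc_intCast]
  have hGnf : ∀ g ∈ TFGroup Br, ∃ (θ : ℝ) (a w : Fin d → ℤ),
      g = Sc θ * Tr (fun i => ((a i : ℝ))) * Mo (Br.mulVec fun i => ((w i : ℝ))) := by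
    intro g hg
    refine Subgroup.closure_induction ?_ ?_ ?_ ?_ hg
    · rintro x (⟨k, rfl⟩ | ⟨z, rfl⟩)
      · exact ⟨0, k, 0, by rw [iv_zero, Matrix.mulVec_zero, Mo_zero, Sc_zero, one_mul, mul_one]⟩
      · exact ⟨0, 0, z, by rw [iv_zero, Tr_zero, Sc_zero, one_mul, one_mul]⟩
    · exact ⟨0, 0, 0, by
        rw [iv_zero, Matrix.mulVec_zero, Tr_zero, Mo_zero, Sc_zero, one_mul, one_mul]⟩
    · rintro x y _ _ ⟨θ, a, w, rfl⟩ ⟨θ', a', w', rfl⟩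
      refine ⟨θ + θ' + dotR (Br.mulVec fun i => ((w i : ℝ))) (fun i => ((a' i : ℝ))),
        a + a', w + w', ?_⟩
      rw [nf_mul, iv_add, iv_add, Matrix.mulVec_add]
    · rintro x _ ⟨θ, a, w, rfl⟩
      refine ⟨dotR (Br.mulVec fun i => ((w i : ℝ))) (fun i => ((a i : ℝ))) - θ, -a, -w, ?_⟩
      rw [nf_inv, iv_neg, iv_neg, Matrix.mulVec_neg]
  have hGG : ∀ τ ∈ ⁅TFGroup Br, TFGroup Br⁆, ∃ θ : ℝ, τ = Sc θ := by
    have hle : ⁅TFGroup Br, TFGroup Br⁆ ≤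
        { carrier := {g | ∃ θ : ℝ, g = Sc θ}
          one_mem' := ⟨0, Sc_zero.symm⟩
          mul_mem' := by rintro x y ⟨θ, rfl⟩ ⟨θ', rfl⟩; exact ⟨θ + θ', Sc_mul θ θ'⟩
          inv_mem' := by rintro x ⟨θ, rfl⟩; exact ⟨-θ, Sc_inv θ⟩ } := by
      rw [Subgroup.commutator_le]
      intro g hg h hh
      obtain ⟨θ, a, w, rfl⟩ := hGnf g hg
      obtain ⟨θ', a', w', rfl⟩ := hGnf h hh
      refine ⟨θ' + dotR (Br.mulVec fun i => ((w i : ℝ))) (fun i => ((a' i : ℝ)))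
          - dotR (Br.mulVec fun i => ((w' i : ℝ))) (fun i => ((a i : ℝ)))
          + (dotR (Br.mulVec fun i => ((w' i : ℝ))) (fun i => ((a' i : ℝ))) - θ')
          + dotR (Br.mulVec fun i => ((w' i : ℝ))) (-fun i => ((a' i : ℝ))), ?_⟩
      rw [commutatorElement_def, conj_nf, nf_inv, nf_mul, add_neg_cancel, add_neg_cancel,
        Tr_zero, Mo_zero, mul_one, mul_one]
    exact fun τ hτ => hle hτ
  have hNnf : ∀ g ∈ Nsub Br, ∃ (θ : ℝ) (a w : Fin d → ℤ),
      (∃ z : Fin d → ℤ, (fun i => ((a i : ℝ))) = (Br⁻¹)ᵀ.mulVec (fun i => ((z i : ℝ)))) ∧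
      g = Sc θ * Tr (fun i => ((a i : ℝ))) * Mo (Br.mulVec fun i => ((w i : ℝ))) := by
    intro g hg
    refine Subgroup.closure_induction ?_ ?_ ?_ ?_ hg
    · rintro x ((⟨k, hk, rfl⟩ | ⟨w, rfl⟩) | hτ)
      · exact ⟨0, k, 0, hk, by
          rw [iv_zero, Matrix.mulVec_zero, Mo_zero, Sc_zero, one_mul, mul_one]⟩
      · refine ⟨0, 0, w, ⟨0, ?_⟩, ?_⟩
        · rw [iv_zero, Matrix.mulVec_zero]
        · rw [iv_zero, Tr_zero, Sc_zero, one_mul, one_mul]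
      · obtain ⟨θ, rfl⟩ := hGG _ hτ
        refine ⟨θ, 0, 0, ⟨0, ?_⟩, ?_⟩
        · rw [iv_zero, Matrix.mulVec_zero]
        · rw [iv_zero, Matrix.mulVec_zero, Tr_zero, Mo_zero, mul_one, mul_one]
    · refine ⟨0, 0, 0, ⟨0, ?_⟩, ?_⟩
      · rw [iv_zero, Matrix.mulVec_zero]
      · rw [iv_zero, Matrix.mulVec_zero, Tr_zero, Mo_zero, Sc_zero, one_mul, one_mul]
    · rintro x y _ _ ⟨θ, a, w, ⟨z, hz⟩, rfl⟩ ⟨θ', a', w', ⟨z', hz'⟩, rfl⟩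
      refine ⟨θ + θ' + dotR (Br.mulVec fun i => ((w i : ℝ))) (fun i => ((a' i : ℝ))),
        a + a', w + w', ⟨z + z', ?_⟩, ?_⟩
      · rw [iv_add, iv_add, Matrix.mulVec_add, hz, hz']
      · rw [nf_mul, iv_add, iv_add, Matrix.mulVec_add]
    · rintro x _ ⟨θ, a, w, ⟨z, hz⟩, rfl⟩
      refine ⟨dotR (Br.mulVec fun i => ((w i : ℝ))) (fun i => ((a i : ℝ))) - θ, -a, -w, ⟨-z, ?_⟩, ?_⟩
      · rw [iv_neg, iv_neg, Matrix.mulVec_neg, hz]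
      · rw [nf_inv, iv_neg, iv_neg, Matrix.mulVec_neg]
  have part1 : ∀ a b : Equiv.Perm ((Fin d → ℝ) → ℂ),
      a ∈ Nsub Br → b ∈ Nsub Br → a * b = b * a := by
    intro a b ha hb
    obtain ⟨θ, a1, w1, ⟨z1, hz1⟩, rfl⟩ := hNnf a ha
    obtain ⟨θ', a2, w2, ⟨z2, hz2⟩, rfl⟩ := hNnf b hb
    rw [nf_mul, nf_mul]
    have h1 : Sc (d := d) (θ + θ' +
        dotR (Br.mulVec fun i => ((w1 i : ℝ))) (fun i => ((a2 i : ℝ)))) = Sc (θ + θ') := by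
      rw [← Sc_mul, hz2, key, mul_one]
    have h2 : Sc (d := d) (θ' + θ +
        dotR (Br.mulVec fun i => ((w2 i : ℝ))) (fun i => ((a1 i : ℝ)))) = Sc (θ' + θ) := by
      rw [← Sc_mul, hz1, key, mul_one]
    rw [h1, h2, add_comm θ' θ, add_comm (fun i => ((a2 i : ℝ))),
      add_comm (Br.mulVec fun i => ((w2 i : ℝ)))]
  have hGGle : ⁅TFGroup Br, TFGroup Br⁆ ≤ TFGroup Br := by
    rw [Subgroup.commutator_le]
    intro g hg h hh
    exact mul_mem (mul_mem (mul_mem hg hh) (inv_mem hg)) (inv_mem hh)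
  have part2 : Nsub Br ≤ TFGroup Br := by
    unfold Nsub
    rw [Subgroup.closure_le]
    rintro x ((⟨k, hk, rfl⟩ | ⟨w, rfl⟩) | hτ)
    · exact Subgroup.subset_closure (Or.inl ⟨k, rfl⟩)
    · exact Subgroup.subset_closure (Or.inr ⟨w, rfl⟩)
    · exact hGGle hτ
  have part3 : ∀ g ∈ TFGroup Br, ∀ n ∈ Nsub Br, g * n * g⁻¹ ∈ Nsub Br := by
    intro g hg n hn
    have hcom : ⁅g, n⁆ ∈ Nsub Br :=
      Subgroup.subset_closure (Or.inr (Subgroup.commutator_mem_commutator hg (part2 hn)))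
    have hrw : g * n * g⁻¹ = ⁅g, n⁆ * n := by
      rw [commutatorElement_def, inv_mul_cancel_right]
    rw [hrw]
    exact mul_mem hcom hn
  refine ⟨part1, part2, part3, ?_, ?_⟩
  · intro s k _ w θ
    have hTs : Tr (fun i => ((s i : ℝ)))
        = Sc 0 * Tr (fun i => ((s i : ℝ))) * Mo (0 : Fin d → ℝ) := by
      rw [Sc_zero, Mo_zero, one_mul, mul_one]
    rw [rearr, hTs, conj_nf, dotR_zero_left, Sc_mul]
    have h3 : θ + 0 - dotR (Br.mulVec fun i => ((w i : ℝ))) (fun i => ((s i : ℝ)))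
        = -dotR (Br.mulVec fun i => ((w i : ℝ))) (fun i => ((s i : ℝ))) + θ := by ring
    rw [h3]
  · intro s' k hk w θ
    obtain ⟨z, hz⟩ := hk
    have hMs : Mo (Br.mulVec fun i => ((s' i : ℝ)))
        = Sc 0 * Tr (0 : Fin d → ℝ) * Mo (Br.mulVec fun i => ((s' i : ℝ))) := by
      rw [Sc_zero, Tr_zero, one_mul, one_mul]
    rw [rearr, hMs, conj_nf, dotR_zero_right, sub_zero, hz]
    have h4 : Sc (d := d) (θ +
        dotR (Br.mulVec fun i => ((s' i : ℝ))) ((Br⁻¹)ᵀ.mulVec fun i => ((z i : ℝ)))) = Sc θ := by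
      rw [← Sc_mul, key, mul_one]
    rw [h4]
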